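/- arXiv:2007.06438 — 2 statements merged into one kernel-verified Lean document; each statement's English description precedes it below -/
import Mathlib

section
/- In any graph G, each prune-equivalence class of walks contains a unique non-prunable representative: if α and β are non-prunable walks that are prune-equivalent, then α = β. -/
/-- A graph: vertex type `V` with a symmetric adjacency relation (loops allowed). -/
structure Graph' (V : Type) where
  Adj : V → V → Prop
  symm : Symmetric Adj

variable {V W X : Type}

/-- `l` is the (nonempty) vertex sequence of a walk in `G`. -/
def IsWalk (G : Graph' V) (l : List V) : Prop :=
  l ≠ [] ∧ l.Chain' G.Adj

/-- `l` is a walk in `G` from `x` to `y`. -/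
def IsWalkFrom (G : Graph' V) (x y : V) (l : List V) : Prop :=
  l.Chain' G.Adj ∧ l.head? = some x ∧ l.getLast? = some y

/-- Concatenation of walks sharing an endpoint: follow `l`, then `m`. -/
def wconcat (l m : List V) : List V := l ++ m.tail

/-- A walk is prunable if some vertex `vᵢ` satisfies `vᵢ = vᵢ₊₂`. -/
def Prunable (l : List V) : Prop :=
  ∃ (p s : List V) (a b : V), l = p ++ a :: b :: a :: s

/-- `m` is obtained from `l` by a single prune (deleting `vᵢ, vᵢ₊₁` when `vᵢ = vᵢ₊₂`). -/
def PruneOf (l m : List V) : Prop :=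
  ∃ (p s : List V) (a b : V), l = p ++ a :: b :: a :: s ∧ m = p ++ a :: s

/-- A single prune step (in either direction) between walks of `G`. -/
def PruneStep (G : Graph' V) (l m : List V) : Prop :=
  IsWalk G l ∧ IsWalk G m ∧ (PruneOf l m ∨ PruneOf m l)

/-- Prune equivalence: the equivalence relation on walks of `G` generated by prunes. -/
def PruneEqv (G : Graph' V) : List V → List V → Prop :=
  Relation.EqvGen (PruneStep G)

/-- A spider move: two walks of `G` of the same length which agree at every index
except (at most) a single interior index. -/
def SpiderStep (G : Graph' V) (l m : List V) : Prop :=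
  IsWalk G l ∧ IsWalk G m ∧ l.length = m.length ∧
    ∃ i : ℕ, 0 < i ∧ i + 1 < l.length ∧ ∀ j : ℕ, j ≠ i → l[j]? = m[j]?

/-- Homotopy rel endpoints (`≡`): the equivalence relation on walks of `G`
generated by prunes and spider moves. -/
def HomEqv (G : Graph' V) : List V → List V → Prop :=
  Relation.EqvGen (fun l m => PruneStep G l m ∨ SpiderStep G l m)

/-- A graph morphism. -/
def IsHom (G : Graph' V) (H : Graph' W) (f : V → W) : Prop :=
  ∀ {u v : V}, G.Adj u v → H.Adj (f u) (f v)

/-- One step of a ×-homotopy between graph morphisms. -/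
def HtpyStep (G : Graph' V) (H : Graph' W) (f g : V → W) : Prop :=
  IsHom G H f ∧ IsHom G H g ∧ ∀ u v, G.Adj u v → H.Adj (f u) (g v)

/-- ×-homotopy of graph morphisms. -/
def Homotopic (G : Graph' V) (H : Graph' W) : (V → W) → (V → W) → Prop :=
  Relation.ReflTransGen (HtpyStep G H)


lemma prune_diamond_half {p₁ s₁ p₂ s₂ t : List V} {a₁ b₁ a₂ b₂ : V}
    (hp : p₂ = p₁ ++ t)
    (ht : a₁ :: b₁ :: a₁ :: s₁ = t ++ a₂ :: b₂ :: a₂ :: s₂) :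
    p₁ ++ a₁ :: s₁ = p₂ ++ a₂ :: s₂ ∨
      ∃ n, PruneOf (p₁ ++ a₁ :: s₁) n ∧ PruneOf (p₂ ++ a₂ :: s₂) n := by
  subst hp
  match t, ht with
  | [], ht =>
    simp at ht
    obtain ⟨h1, h2, h3⟩ := ht
    left; rw [h1, h3.2]; simp
  | [x], ht =>
    simp at ht
    obtain ⟨h1, h2, h3, h4⟩ := ht
    left; subst h1 h2 h3 h4; simp
  | [x, y], ht =>
    simp at ht
    obtain ⟨h1, h2, h3, h4⟩ := ht
    subst h1 h2 h3
    right
    refine ⟨p₁ ++ a₁ :: s₂, ⟨p₁, s₂, a₁, b₂, by rw [h4], rfl⟩,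
      ⟨p₁, s₂, a₁, b₁, by simp, by simp⟩⟩
  | x :: y :: z :: t', ht =>
    simp only [List.cons_append, List.cons.injEq] at ht
    obtain ⟨h1, h2, h3, h4⟩ := ht
    subst h1 h2 h3
    right
    refine ⟨p₁ ++ a₁ :: (t' ++ a₂ :: s₂),
      ⟨p₁ ++ a₁ :: t', s₂, a₂, b₂, by rw [h4]; simp, by simp⟩,
      ⟨p₁, t' ++ a₂ :: s₂, a₁, b₁, by simp, rfl⟩⟩

lemma prune_diamond {l m₁ m₂ : List V} (h₁ : PruneOf l m₁) (h₂ : PruneOf l m₂) :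
    m₁ = m₂ ∨ ∃ n, PruneOf m₁ n ∧ PruneOf m₂ n := by
  obtain ⟨p₁, s₁, a₁, b₁, hl₁, hm₁⟩ := h₁
  obtain ⟨p₂, s₂, a₂, b₂, hl₂, hm₂⟩ := h₂
  subst hm₁ hm₂
  rw [hl₁] at hl₂
  rw [List.append_eq_append_iff] at hl₂
  rcases hl₂ with ⟨t, hp, ht⟩ | ⟨t, hp, ht⟩
  · exact prune_diamond_half hp ht
  · rcases prune_diamond_half hp ht with h | ⟨n, hn₁, hn₂⟩
    · exact Or.inl h.symm
    · exact Or.inr ⟨n, hn₂, hn₁⟩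

lemma not_prunable_no_prune {l m : List V} (h : ¬ Prunable l) : ¬ PruneOf l m := by
  rintro ⟨p, s, a, b, hl, -⟩
  exact h ⟨p, s, a, b, hl⟩

lemma pruneEqv_join {G : Graph' V} {l m : List V} (h : PruneEqv G l m) :
    Relation.Join (Relation.ReflTransGen (fun l m : List V => PruneOf l m)) l m := by
  have heq := Relation.equivalence_join_reflTransGen
    (r := fun l m : List V => PruneOf l m)
    (fun a b c hab hac => by
      rcases prune_diamond hab hac with h | ⟨n, hn₁, hn₂⟩
      · exact ⟨b, Relation.ReflGen.refl, h ▸ Relation.ReflTransGen.refl⟩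
      · exact ⟨n, Relation.ReflGen.single hn₁, Relation.ReflTransGen.single hn₂⟩)
  induction h with
  | rel l m hlm =>
    rcases hlm.2.2 with h | h
    · exact ⟨m, Relation.ReflTransGen.single h, Relation.ReflTransGen.refl⟩
    · exact ⟨l, Relation.ReflTransGen.refl, Relation.ReflTransGen.single h⟩
  | refl l => exact heq.refl l
  | symm l m _ ih => exact heq.symm ih
  | trans l m n _ _ ih₁ ih₂ => exact heq.trans ih₁ ih₂

/-- each prune-equivalence class of walks has a unique non-prunable
representative. -/
theorem stmt1 (G : Graph' V) (α β : List V) (hα : IsWalk G α) (hβ : IsWalk G β)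
    (h : PruneEqv G α β) (hnα : ¬ Prunable α) (hnβ : ¬ Prunable β) : α = β := by
  obtain ⟨c, hac, hbc⟩ := pruneEqv_join h
  have e₁ : α = c := by
    rcases hac.cases_head with h | ⟨m, hm, -⟩
    · exact h
    · exact absurd hm (not_prunable_no_prune hnα)
  have e₂ : β = c := by
    rcases hbc.cases_head with h | ⟨m, hm, -⟩
    · exact h
    · exact absurd hm (not_prunable_no_prune hnβ)
  rw [e₁, e₂]
end

section
/- Let α = (v₀ … vₙ) be a walk in a graph G that is prunable at i, so vᵢ = vᵢ₊₂. Then α is homotopic rel endpoints (connected by a finite sequence of spider moves, without changing length) to the walk (v₀ … vᵢ₋₁ vᵢ vᵢ₊₃ … vₙ vₙ₋₁ vₙ) obtained by deleting the repeated pair vᵢ₊₁, vᵢ₊₂ and appending the final edge twice at the end. -/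
variable {V W X : Type}

lemma aux_get (u : List V) (y z : V) (t : List V) (j : ℕ) (hj : j ≠ u.length) :
    (u ++ y::t)[j]? = (u ++ z::t)[j]? := by
  rcases Nat.lt_trichotomy j u.length with h | h | h
  · simp [List.getElem?_append, h]
  · exact absurd h hj
  · have h' : u.length ≤ j := le_of_lt h
    rw [List.getElem?_append_right h', List.getElem?_append_right h']
    obtain ⟨k, hk⟩ := Nat.exists_eq_add_of_lt h
    have : j - u.length = k + 1 := by omega
    simp [this]

lemma aux_suf (u u' s q : List V) (c d : V)
    (h : u ++ s = q ++ [c,d]) (hs : 2 ≤ s.length) : ∃ q', u' ++ s = q' ++ [c,d] := by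
  have h1 : [c,d] <:+ u ++ s := h ▸ List.suffix_append q [c,d]
  have h2 : s <:+ u ++ s := List.suffix_append u s
  have h3 : [c,d] <:+ s := List.suffix_of_suffix_length_le h1 h2 (by simpa using hs)
  obtain ⟨r, hr⟩ := h3
  exact ⟨u' ++ r, by rw [← hr, List.append_assoc]⟩


/-- a walk prunable at `i` is connected by a finite sequence of spider
moves (rel endpoints, without changing length) to the walk obtained by deleting the
repeated pair and appending the final edge twice at the end. -/
theorem stmt9 (G : Graph' V) (p s q : List V) (a b c d : V)
    (hw : IsWalk G (p ++ a :: b :: a :: s))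
    (hq : p ++ a :: b :: a :: s = q ++ [c, d]) :
    Relation.EqvGen (SpiderStep G) (p ++ a :: b :: a :: s) ((p ++ a :: s) ++ [c, d]) := by
  induction s generalizing p a b q with
  | nil =>
    have heq : (p ++ [a]) ++ [b, a] = q ++ [c, d] := by simpa using hq
    obtain ⟨h1, h2⟩ := List.append_inj' heq rfl
    obtain ⟨hc1, hd1⟩ : c = b ∧ d = a := by simpa using h2.symm
    have e : (p ++ a :: ([] : List V)) ++ [c, d] = p ++ a :: b :: a :: [] := by
      rw [hc1, hd1]; simp
    rw [e]
    exact Relation.EqvGen.refl _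
  | cons x s' ih =>
    -- chain facts from hw
    have hc := hw.2
    unfold List.Chain' at hc
    rw [List.isChain_append] at hc
    obtain ⟨hp, hrest, hconn⟩ := hc
    simp only [List.isChain_cons_cons] at hrest
    obtain ⟨hab, hba, hax, hxs⟩ : G.Adj a b ∧ G.Adj b a ∧ G.Adj a x ∧ (x :: s').Chain' G.Adj := by
      exact ⟨hrest.1, hrest.2.1, hrest.2.2.1, hrest.2.2.2⟩
    -- the new walk l'
    have hc' : (p ++ a :: x :: a :: x :: s').Chain' G.Adj := by
      unfold List.Chain'
      rw [List.isChain_append]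
      refine ⟨hp, ?_, ?_⟩
      · simp only [List.isChain_cons_cons]
        exact ⟨hax, G.symm hax, hax, hxs⟩
      · intro y hy z hz
        simp only [List.head?_cons, Option.mem_def, Option.some.injEq] at hz
        subst hz
        exact hconn y hy a (by simp)
    have hw' : IsWalk G (p ++ a :: x :: a :: x :: s') := ⟨by simp, hc'⟩
    -- the spider step
    have hstep : SpiderStep G (p ++ a :: b :: a :: x :: s') (p ++ a :: x :: a :: x :: s') := by
      refine ⟨hw, hw', by simp, p.length + 1, Nat.succ_pos _, by simp; omega, ?_⟩
      intro j hj
      have e1 : p ++ a :: b :: a :: x :: s' = (p ++ [a]) ++ b :: (a :: x :: s') := by simp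
      have e2 : p ++ a :: x :: a :: x :: s' = (p ++ [a]) ++ x :: (a :: x :: s') := by simp
      rw [e1, e2]
      exact aux_get _ _ _ _ j (by simpa using hj)
    -- get q' for the new walk
    obtain ⟨q', hq'⟩ := aux_suf (p ++ [a, b]) (p ++ [a, x]) (a :: x :: s') q c d
      (by simpa [List.append_assoc] using hq) (by simp)
    have hq'' : (p ++ [a]) ++ x :: a :: x :: s' = q' ++ [c, d] := by
      simpa [List.append_assoc] using hq'
    have hw'' : IsWalk G ((p ++ [a]) ++ x :: a :: x :: s') := by
      simpa [List.append_assoc] using hw'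
    have hih := ih (p ++ [a]) q' x a hw'' hq''
    have e3 : (p ++ [a]) ++ x :: a :: x :: s' = p ++ a :: x :: a :: x :: s' := by simp
    have e4 : ((p ++ [a]) ++ x :: s') ++ [c, d] = (p ++ a :: x :: s') ++ [c, d] := by simp
    rw [e3, e4] at hih
    exact Relation.EqvGen.trans _ _ _ (Relation.EqvGen.rel _ _ hstep) hih
end
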